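/- arXiv:1401.3684 — 6 statements merged into one kernel-verified Lean document; each statement's English description precedes it below -/
import Mathlib

section
/- Under the EIM recursion, for all 1 ≤ m ≤ d one has q_m(x_m) = 1, and q_m(x_l) = 0 whenever 1 ≤ l < m ≤ d. Consequently, for each 1 ≤ k ≤ d the matrix B^(k) ∈ ℂ^{k×k} with entries B^(k)_{l,m} = q_m(x_l) is lower triangular with unit diagonal, and hence invertible. -/
/-- Under the EIM recursion, `q m (x m) = 1` and `q m (x l) = 0` for `l < m`; consequently
each matrix `B^(k)` with entries `B^(k)_{l,m} = q m (x l)` is lower triangular with unit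
diagonal, hence invertible. -/
theorem stmt1 {P Ω : Type*} [Nonempty P] [Nonempty Ω]
    (g : P → Ω → ℂ) (d : ℕ) (hd : 1 ≤ d)
    (x : Fin d → Ω) (μ : Fin d → P) (q : Fin d → Ω → ℂ)
    (lam : ℕ → P → Fin d → ℂ)
    -- initialization of the recursion
    (h0 : g (μ ⟨0, hd⟩) (x ⟨0, hd⟩) ≠ 0)
    (hq0 : ∀ y : Ω, q ⟨0, hd⟩ y = g (μ ⟨0, hd⟩) y / g (μ ⟨0, hd⟩) (x ⟨0, hd⟩))
    -- for 1 ≤ k < d, λ(μ) solves the k×k linear system with matrix B^(k)_{l,m} = q_m(x_l)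
    (hlam : ∀ k, 1 ≤ k → k < d → ∀ (p : P) (l : Fin d), (l : ℕ) < k →
      ∑ m : Fin d, (if (m : ℕ) < k then q m (x l) * lam k p m else 0) = g p (x l))
    -- the residual δ_k g = g - I_k g is nonzero at (μ_{k+1}, x_{k+1})
    (hres : ∀ k (hk1 : 1 ≤ k) (hk : k < d),
      g (μ ⟨k, hk⟩) (x ⟨k, hk⟩) -
        ∑ m : Fin d, (if (m : ℕ) < k then lam k (μ ⟨k, hk⟩) m * q m (x ⟨k, hk⟩) else 0) ≠ 0)
    -- q_{k+1} is the normalized residual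
    (hqk : ∀ k (hk1 : 1 ≤ k) (hk : k < d) (y : Ω),
      q ⟨k, hk⟩ y =
        (g (μ ⟨k, hk⟩) y -
          ∑ m : Fin d, (if (m : ℕ) < k then lam k (μ ⟨k, hk⟩) m * q m y else 0)) /
        (g (μ ⟨k, hk⟩) (x ⟨k, hk⟩) -
          ∑ m : Fin d, (if (m : ℕ) < k then lam k (μ ⟨k, hk⟩) m * q m (x ⟨k, hk⟩) else 0))) :
    (∀ m : Fin d, q m (x m) = 1) ∧
    (∀ l m : Fin d, l < m → q m (x l) = 0) ∧
    (∀ k (hk1 : 1 ≤ k) (hk : k ≤ d),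
      (∀ l m : Fin k, l < m → q (Fin.castLE hk m) (x (Fin.castLE hk l)) = 0) ∧
      (∀ m : Fin k, q (Fin.castLE hk m) (x (Fin.castLE hk m)) = 1) ∧
      IsUnit (Matrix.of fun l m : Fin k => q (Fin.castLE hk m) (x (Fin.castLE hk l)))) := by
  have hdiag : ∀ m : Fin d, q m (x m) = 1 := by
    intro m
    rcases Nat.eq_zero_or_pos m.1 with h | h
    · have hm : m = ⟨0, hd⟩ := Fin.ext h
      rw [hm, hq0, div_self h0]
    · have hk : (m : ℕ) < d := m.2
      have := hqk m.1 h hk (x ⟨m.1, hk⟩)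
      rw [div_self (hres m.1 h hk)] at this
      simpa using this
  have hzero : ∀ l m : Fin d, l < m → q m (x l) = 0 := by
    intro l m hlm
    have h : 1 ≤ m.1 := Nat.one_le_iff_ne_zero.mpr (Nat.pos_of_ne_zero ?_).ne'
    · have hk : (m : ℕ) < d := m.2
      have heq := hqk m.1 h hk (x l)
      have hnum : g (μ ⟨m.1, hk⟩) (x l) -
          ∑ j : Fin d, (if (j : ℕ) < m.1 then lam m.1 (μ ⟨m.1, hk⟩) j * q j (x l) else 0) = 0 := by
        have := hlam m.1 h hk (μ ⟨m.1, hk⟩) l hlm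
        rw [sub_eq_zero, ← this]
        exact Finset.sum_congr rfl (fun j _ => by split <;> ring)
      rw [hnum, zero_div] at heq
      simpa using heq
    · exact Nat.ne_zero_of_lt hlm
  refine ⟨hdiag, hzero, fun k hk1 hk => ?_⟩
  have hz : ∀ l m : Fin k, l < m → q (Fin.castLE hk m) (x (Fin.castLE hk l)) = 0 :=
    fun l m hlm => hzero _ _ (by simpa using hlm)
  have hdd : ∀ m : Fin k, q (Fin.castLE hk m) (x (Fin.castLE hk m)) = 1 := fun m => hdiag _
  refine ⟨hz, hdd, ?_⟩
  rw [Matrix.isUnit_iff_isUnit_det]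
  have hdet : (Matrix.of fun l m : Fin k =>
      q (Fin.castLE hk m) (x (Fin.castLE hk l))).det = 1 := by
    rw [Matrix.det_of_lowerTriangular (Matrix.of fun l m : Fin k => q (Fin.castLE hk m) (x (Fin.castLE hk l))) (fun i j hij => hz i j hij)]
    simp [hdd]
  rw [hdet]; exact isUnit_one
end

section
/- (Inductive step of Lemma 1.) Fix 1 ≤ k < d and suppose Γ^(k) ∈ ℂ^{k×k} satisfies Σ_{m=1}^k Γ^(k)_{l,m} q_m(x) = g(μ_l, x) for all 1 ≤ l ≤ k and all x ∈ Ω. Define Γ^(k+1) ∈ ℂ^{(k+1)×(k+1)} by: Γ^(k+1)_{l,m} = Γ^(k)_{l,m} for l,m ≤ k; Γ^(k+1)_{l,k+1} = 0 for l ≤ k; Γ^(k+1)_{k+1,k+1} = (δ_k g)(μ_{k+1}, x_{k+1}); and Γ^(k+1)_{k+1,l} = κ_l for l ≤ k, where κ ∈ ℂ^k is the unique solution of Σ_{m=1}^k B^(k)_{l,m} κ_m = g(μ_{k+1}, x_l) for all 1 ≤ l ≤ k. Then Σ_{m=1}^{k+1} Γ^(k+1)_{l,m} q_m(x) = g(μ_l,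 x) for all 1 ≤ l ≤ k+1 and all x ∈ Ω. -/
lemma aux_sum {d k : ℕ} (h : k ≤ d) (f : Fin d → ℂ) :
    ∑ m : Fin d, (if (m : ℕ) < k then f m else 0) = ∑ m : Fin k, f (Fin.castLE h m) := by
  rw [← Finset.sum_filter]
  refine Finset.sum_bij (fun (m : Fin d) hm => (⟨(m : ℕ), by simpa using hm⟩ : Fin k))
    ?_ ?_ ?_ ?_
  · intros; simp
  · intros a ha b hb hab; simpa [Fin.ext_iff] using hab
  · intro b _; exact ⟨Fin.castLE h b, by simp, by simp⟩
  · intros; simp [Fin.ext_iff]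

/-- Inductive step of Lemma 1: given the change-of-basis matrix `Γ^(k)` at rank `k`,
the matrix `Γ^(k+1)` defined from `Γ^(k)`, the residual value and the vector `κ`
is the change-of-basis matrix at rank `k+1`. -/
theorem stmt6 {P Ω : Type*} [Nonempty P] [Nonempty Ω]
    (g : P → Ω → ℂ) (d : ℕ)
    (x : Fin d → Ω) (μ : Fin d → P) (q : Fin d → Ω → ℂ)
    (k : ℕ) (hk1 : 1 ≤ k) (hk : k < d)
    (lam : P → Fin d → ℂ)
    -- λ(μ) solves the rank-k EIM system with matrix B^(k)_{l,m} = q_m(x_l)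
    (hlam : ∀ (p : P) (l : Fin d), (l : ℕ) < k →
      ∑ m : Fin d, (if (m : ℕ) < k then q m (x l) * lam p m else 0) = g p (x l))
    -- the residual δ_k g is nonzero at (μ_{k+1}, x_{k+1})
    (hres : g (μ ⟨k, hk⟩) (x ⟨k, hk⟩) -
      ∑ m : Fin d, (if (m : ℕ) < k then lam (μ ⟨k, hk⟩) m * q m (x ⟨k, hk⟩) else 0) ≠ 0)
    -- q_{k+1} is the normalized residual
    (hqk : ∀ y : Ω, q ⟨k, hk⟩ y =
      (g (μ ⟨k, hk⟩) y -
        ∑ m : Fin d, (if (m : ℕ) < k then lam (μ ⟨k, hk⟩) m * q m y else 0)) /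
      (g (μ ⟨k, hk⟩) (x ⟨k, hk⟩) -
        ∑ m : Fin d, (if (m : ℕ) < k then lam (μ ⟨k, hk⟩) m * q m (x ⟨k, hk⟩) else 0)))
    (Γk : Matrix (Fin k) (Fin k) ℂ)
    (hΓk : ∀ (l : Fin k) (y : Ω),
      ∑ m : Fin k, Γk l m * q (Fin.castLE hk.le m) y = g (μ (Fin.castLE hk.le l)) y)
    (κ : Fin k → ℂ)
    -- κ is the solution of Σ_m B^(k)_{l,m} κ_m = g(μ_{k+1}, x_l)
    (hκ : ∀ l : Fin k, ∑ m : Fin k,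
      q (Fin.castLE hk.le m) (x (Fin.castLE hk.le l)) * κ m =
      g (μ ⟨k, hk⟩) (x (Fin.castLE hk.le l)))
    (hκuniq : ∀ κ' : Fin k → ℂ,
      (∀ l : Fin k, ∑ m : Fin k,
        q (Fin.castLE hk.le m) (x (Fin.castLE hk.le l)) * κ' m =
        g (μ ⟨k, hk⟩) (x (Fin.castLE hk.le l))) → κ' = κ)
    (Γk1 : Matrix (Fin (k + 1)) (Fin (k + 1)) ℂ)
    (hG1 : ∀ l m : Fin k, Γk1 (Fin.castSucc l) (Fin.castSucc m) = Γk l m)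
    (hG2 : ∀ l : Fin k, Γk1 (Fin.castSucc l) (Fin.last k) = 0)
    (hG3 : Γk1 (Fin.last k) (Fin.last k) =
      g (μ ⟨k, hk⟩) (x ⟨k, hk⟩) -
        ∑ m : Fin d, (if (m : ℕ) < k then lam (μ ⟨k, hk⟩) m * q m (x ⟨k, hk⟩) else 0))
    (hG4 : ∀ l : Fin k, Γk1 (Fin.last k) (Fin.castSucc l) = κ l) :
    ∀ (l : Fin (k + 1)) (y : Ω),
      ∑ m : Fin (k + 1), Γk1 l m * q (Fin.castLE hk m) y = g (μ (Fin.castLE hk l)) y := by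

  -- κ equals lam (μ k) restricted
  have hκeq : (fun m : Fin k => lam (μ ⟨k, hk⟩) (Fin.castLE hk.le m)) = κ := by
    apply hκuniq
    intro l
    have := hlam (μ ⟨k, hk⟩) (Fin.castLE hk.le l) l.isLt
    rw [aux_sum hk.le] at this
    exact this
  intro l y
  rw [Fin.sum_univ_castSucc]
  have hcast : ∀ m : Fin k, Fin.castLE hk (Fin.castSucc m) = Fin.castLE hk.le m := by
    intro m; ext; simp
  have hlastcast : (Fin.castLE hk (Fin.last k)) = (⟨k, hk⟩ : Fin d) := by ext; simp
  refine Fin.lastCases ?_ ?_ l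
  · -- l = last
    rw [hlastcast]
    have hsum : ∑ m : Fin k, Γk1 (Fin.last k) (Fin.castSucc m) * q (Fin.castLE hk (Fin.castSucc m)) y
        = ∑ m : Fin d, (if (m : ℕ) < k then lam (μ ⟨k, hk⟩) m * q m y else 0) := by
      rw [aux_sum hk.le (f := fun m => lam (μ ⟨k, hk⟩) m * q m y)]
      refine Finset.sum_congr rfl fun m _ => ?_
      rw [hG4, hcast, ← hκeq]
    rw [hsum, hG3, hqk y, mul_div_cancel₀ _ hres]
    ring
  · -- l = castSucc i
    intro i
    rw [hG2, zero_mul, add_zero]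
    have : Fin.castLE hk (Fin.castSucc i) = Fin.castLE hk.le i := hcast i
    rw [this]
    calc ∑ m : Fin k, Γk1 (Fin.castSucc i) (Fin.castSucc m) * q (Fin.castLE hk (Fin.castSucc m)) y
        = ∑ m : Fin k, Γk i m * q (Fin.castLE hk.le m) y := by
          refine Finset.sum_congr rfl fun m _ => ?_; rw [hG1, hcast]
      _ = g (μ (Fin.castLE hk.le i)) y := hΓk i y
end

section
/- Under the EIM recursion, there exists a unique matrix Γ ∈ ℂ^{d×d} such that Σ_{m=1}^d Γ_{l,m} q_m(x) = g(μ_l, x) for all 1 ≤ l ≤ d and all x ∈ Ω; this Γ is lower triangular (Γ_{l,m} = 0 for m > l), its diagonal entries are Γ_{1,1} = g(μ₁, x₁) and Γ_{k+1,k+1} = (δ_k g)(μ_{k+1}, x_{k+1}) for 1 ≤ k < d, all nonzero, and consequently Γ is invertible. -/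
/-- Lemma 1: under the EIM recursion there is a unique matrix `Γ` with
`Σ_m Γ_{l,m} q_m(x) = g(μ_l, x)`; it is lower triangular with nonzero diagonal entries
`Γ_{1,1} = g(μ₁,x₁)` and `Γ_{k+1,k+1} = (δ_k g)(μ_{k+1},x_{k+1})`, hence invertible. -/
theorem stmt7 {P Ω : Type*} [Nonempty P] [Nonempty Ω]
    (g : P → Ω → ℂ) (d : ℕ) (hd : 1 ≤ d)
    (x : Fin d → Ω) (μ : Fin d → P) (q : Fin d → Ω → ℂ)
    (lam : ℕ → P → Fin d → ℂ)
    (h0 : g (μ ⟨0, hd⟩) (x ⟨0, hd⟩) ≠ 0)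
    (hq0 : ∀ y : Ω, q ⟨0, hd⟩ y = g (μ ⟨0, hd⟩) y / g (μ ⟨0, hd⟩) (x ⟨0, hd⟩))
    (hlam : ∀ k, 1 ≤ k → k < d → ∀ (p : P) (l : Fin d), (l : ℕ) < k →
      ∑ m : Fin d, (if (m : ℕ) < k then q m (x l) * lam k p m else 0) = g p (x l))
    (hres : ∀ k (hk1 : 1 ≤ k) (hk : k < d),
      g (μ ⟨k, hk⟩) (x ⟨k, hk⟩) -
        ∑ m : Fin d, (if (m : ℕ) < k then lam k (μ ⟨k, hk⟩) m * q m (x ⟨k, hk⟩) else 0) ≠ 0)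
    (hqk : ∀ k (hk1 : 1 ≤ k) (hk : k < d) (y : Ω),
      q ⟨k, hk⟩ y =
        (g (μ ⟨k, hk⟩) y -
          ∑ m : Fin d, (if (m : ℕ) < k then lam k (μ ⟨k, hk⟩) m * q m y else 0)) /
        (g (μ ⟨k, hk⟩) (x ⟨k, hk⟩) -
          ∑ m : Fin d, (if (m : ℕ) < k then lam k (μ ⟨k, hk⟩) m * q m (x ⟨k, hk⟩) else 0))) :
    (∃! Γ : Matrix (Fin d) (Fin d) ℂ,
      ∀ (l : Fin d) (y : Ω), ∑ m : Fin d, Γ l m * q m y = g (μ l) y) ∧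
    (∀ Γ : Matrix (Fin d) (Fin d) ℂ,
      (∀ (l : Fin d) (y : Ω), ∑ m : Fin d, Γ l m * q m y = g (μ l) y) →
      (∀ l m : Fin d, l < m → Γ l m = 0) ∧
      Γ ⟨0, hd⟩ ⟨0, hd⟩ = g (μ ⟨0, hd⟩) (x ⟨0, hd⟩) ∧
      (∀ k (hk1 : 1 ≤ k) (hk : k < d),
        Γ ⟨k, hk⟩ ⟨k, hk⟩ =
          g (μ ⟨k, hk⟩) (x ⟨k, hk⟩) -
            ∑ m : Fin d, (if (m : ℕ) < k then lam k (μ ⟨k, hk⟩) m * q m (x ⟨k, hk⟩) else 0)) ∧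
      (∀ m : Fin d, Γ m m ≠ 0) ∧
      IsUnit Γ) := by
  classical
  -- diagonal values
  set D : Fin d → ℂ := fun l =>
    g (μ l) (x l) - ∑ m : Fin d,
      (if (m : ℕ) < (l : ℕ) then lam l (μ l) m * q m (x l) else 0) with hDdef
  have hD0 : D ⟨0, hd⟩ = g (μ ⟨0, hd⟩) (x ⟨0, hd⟩) := by
    simp only [hDdef]
    rw [Finset.sum_eq_zero fun m _ => if_neg (Nat.not_lt_zero _)]
    ring
  have hDne : ∀ l : Fin d, D l ≠ 0 := by
    intro l
    by_cases h : (l : ℕ) = 0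
    · have hl : l = ⟨0, hd⟩ := Fin.ext h
      rw [hl, hD0]; exact h0
    · have h1 : 1 ≤ (l : ℕ) := Nat.one_le_iff_ne_zero.2 h
      have := hres (l : ℕ) h1 l.2
      simpa [hDdef] using this
  -- candidate matrix
  set Γ₀ : Matrix (Fin d) (Fin d) ℂ := fun l m =>
    if (m : ℕ) < (l : ℕ) then lam l (μ l) m else if m = l then D l else 0 with hΓ₀def
  -- q values at interpolation points
  have hqx_diag : ∀ l : Fin d, q l (x l) = 1 := by
    intro l
    by_cases h : (l : ℕ) = 0
    · have hl : l = ⟨0, hd⟩ := Fin.ext h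
      rw [hl, hq0]; exact div_self h0
    · have h1 : 1 ≤ (l : ℕ) := Nat.one_le_iff_ne_zero.2 h
      have hql := hqk (l : ℕ) h1 l.2 (x l)
      have hne := hres (l : ℕ) h1 l.2
      have hl : (⟨(l : ℕ), l.2⟩ : Fin d) = l := rfl
      rw [hl] at hql hne
      rw [hql]; exact div_self hne
  have hqx_zero : ∀ l m : Fin d, (l : ℕ) < (m : ℕ) → q m (x l) = 0 := by
    intro l m hlm
    have h1 : 1 ≤ (m : ℕ) := Nat.one_le_iff_ne_zero.2 (by omega)
    have hql := hqk (m : ℕ) h1 m.2 (x l)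
    have hm : (⟨(m : ℕ), m.2⟩ : Fin d) = m := rfl
    rw [hm] at hql
    have hl := hlam (m : ℕ) h1 m.2 (μ m) l hlm
    have hnum : g (μ m) (x l) -
        ∑ j : Fin d, (if (j : ℕ) < (m : ℕ) then lam m (μ m) j * q j (x l) else 0) = 0 := by
      rw [sub_eq_zero, ← hl]
      refine Finset.sum_congr rfl fun j _ => ?_
      split <;> [ring; rfl]
    rw [hql, hnum, zero_div]
  -- Γ₀ satisfies the interpolation identity
  have hΓ₀ : ∀ (l : Fin d) (y : Ω), ∑ m : Fin d, Γ₀ l m * q m y = g (μ l) y := by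
    intro l y
    have hsplit : ∀ m : Fin d, Γ₀ l m * q m y =
        (if (m : ℕ) < (l : ℕ) then lam l (μ l) m * q m y else 0) +
        (if m = l then D l * q l y else 0) := by
      intro m
      by_cases h1 : (m : ℕ) < (l : ℕ)
      · have h1' : m < l := by rw [Fin.lt_def]; exact h1
        have h2 : ¬ m = l := fun e => by simp [e] at h1
        simp [hΓ₀def, h1, h1', h2]
      · have h1' : ¬ m < l := by rw [Fin.lt_def]; exact h1
        by_cases h2 : m = l
        · subst h2; simp [hΓ₀def, h1, h1']
        · simp [hΓ₀def, h1, h1', h2]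
    rw [Finset.sum_congr rfl fun m _ => hsplit m, Finset.sum_add_distrib,
      Finset.sum_ite_eq' Finset.univ l (fun _ => D l * q l y)]
    simp only [Finset.mem_univ, if_true]
    by_cases h : (l : ℕ) = 0
    · have hl : l = ⟨0, hd⟩ := Fin.ext h
      subst hl
      rw [hq0 y, hD0]
      have hz : ∀ m : Fin d,
          (if (m : ℕ) < ((⟨0, hd⟩ : Fin d) : ℕ) then lam (⟨0, hd⟩ : Fin d) (μ ⟨0, hd⟩) m * q m y else 0) = 0 := by
        intro m; simp
      rw [Finset.sum_congr rfl fun m _ => hz m]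
      field_simp
      simp
    · have h1 : 1 ≤ (l : ℕ) := Nat.one_le_iff_ne_zero.2 h
      have hql := hqk (l : ℕ) h1 l.2 y
      have hl : (⟨(l : ℕ), l.2⟩ : Fin d) = l := rfl
      rw [hl] at hql
      have hne' : (g (μ l) (x l) -
          ∑ m : Fin d, (if (m : ℕ) < (l : ℕ) then lam l (μ l) m * q m (x l) else 0)) ≠ 0 :=
        hDne l
      rw [hql, hDdef]
      rw [mul_comm, div_mul_cancel₀ _ hne']
      ring
  -- linear independence of the q's at the points x
  have hlin : ∀ c : Fin d → ℂ, (∀ j : Fin d, ∑ m : Fin d, c m * q m (x j) = 0) →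
      ∀ m : Fin d, c m = 0 := by
    intro c hc
    have H : ∀ n : ℕ, ∀ m : Fin d, (m : ℕ) < n → c m = 0 := by
      intro n
      induction n with
      | zero => intro m hm; omega
      | succ n ih =>
        intro m hm
        rcases Nat.lt_or_ge (m : ℕ) n with h | h
        · exact ih m h
        · -- (m : ℕ) = n
          have key : ∀ i : Fin d, c i * q i (x m) = if i = m then c m else 0 := by
            intro i
            by_cases h1 : (i : ℕ) < (m : ℕ)
            · have : c i = 0 := ih i (by omega)
              have h2 : ¬ i = m := fun e => by simp [e] at h1
              simp [this, h2]
            · by_cases h2 : i = m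
              · subst h2; simp [hqx_diag]
              · have h3 : (m : ℕ) < (i : ℕ) := by
                  rcases Nat.lt_or_ge (m : ℕ) (i : ℕ) with h' | h'
                  · exact h'
                  · exact absurd (Fin.ext (by omega)) h2
                simp [hqx_zero m i h3, h2]
          have := hc m
          rw [Finset.sum_congr rfl fun i _ => key i,
            Finset.sum_ite_eq' Finset.univ m (fun _ => c m)] at this
          simpa using this
    exact fun m => H d m m.2
  -- uniqueness
  have huniq : ∀ Γ : Matrix (Fin d) (Fin d) ℂ,
      (∀ (l : Fin d) (y : Ω), ∑ m : Fin d, Γ l m * q m y = g (μ l) y) → Γ = Γ₀ := by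
    intro Γ hΓ
    funext l m
    have h := hlin (fun m => Γ l m - Γ₀ l m) (fun j => by
      have := hΓ l (x j)
      have h2 := hΓ₀ l (x j)
      simp only [sub_mul, Finset.sum_sub_distrib, this, h2, sub_self])
    exact sub_eq_zero.1 (h m)
  -- properties of Γ₀
  have hlow : ∀ l m : Fin d, l < m → Γ₀ l m = 0 := by
    intro l m hlm
    have h1 : ¬ (m : ℕ) < (l : ℕ) := by
      have := (Fin.lt_iff_val_lt_val.1 hlm); omega
    have h1' : ¬ m < l := by rw [Fin.lt_def]; exact h1
    have h2 : ¬ m = l := fun e => by subst e; exact lt_irrefl m hlm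
    simp [hΓ₀def, h1, h1', h2]
  have hdiag : ∀ l : Fin d, Γ₀ l l = D l := by
    intro l; simp [hΓ₀def]
  have hunit : IsUnit Γ₀ := by
    rw [Matrix.isUnit_iff_isUnit_det]
    have hdet : Γ₀.det = ∏ i : Fin d, Γ₀ i i := by
      apply Matrix.det_of_lowerTriangular
      intro i j hij
      exact hlow i j hij
    rw [hdet]
    refine isUnit_iff_ne_zero.2 (Finset.prod_ne_zero_iff.2 fun i _ => ?_)
    rw [hdiag]; exact hDne i
  refine ⟨⟨Γ₀, hΓ₀, huniq⟩, fun Γ hΓ => ?_⟩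
  have hΓeq : Γ = Γ₀ := huniq Γ hΓ
  subst hΓeq
  refine ⟨hlow, ?_, ?_, fun m => ?_, hunit⟩
  · rw [hdiag, hD0]
  · intro k hk1 hk
    rw [hdiag]
  · rw [hdiag]; exact hDne m
end

section
/- Suppose in addition that Γ ∈ ℂ^{d×d} is an invertible matrix such that Σ_{m=1}^d Γ_{l,m} q_m(x) = g(μ_l, x) for all 1 ≤ l ≤ d and all x ∈ Ω, where μ₁,…,μ_d ∈ 𝒫 are given parameter points. Set Δ := (Γ Bᵗ)⁻¹. Then for all μ ∈ 𝒫 and x ∈ Ω, (I_d g)(μ,x) = Σ_{l=1}^d Σ_{r=1}^d Δ_{l,r} g(μ, x_l) g(μ_r, x). (Formula (12) of the paper.) -/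
open Matrix

/-- Formula (12): with `Δ = (Γ Bᵗ)⁻¹`, the EIM interpolant satisfies
`(I_d g)(μ,x) = Σ_{l,r} Δ_{l,r} g(μ,x_l) g(μ_r,x)`. -/
theorem stmt8 {P Ω : Type*} [Nonempty P] [Nonempty Ω]
    (g : P → Ω → ℂ) (d : ℕ) (hd : 1 ≤ d)
    (x : Fin d → Ω) (μ : Fin d → P) (q : Fin d → Ω → ℂ)
    (B : Matrix (Fin d) (Fin d) ℂ)
    (hB : ∀ l m : Fin d, B l m = q m (x l))
    (hBinv : IsUnit B)
    (lam : P → Fin d → ℂ)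
    (hlam : ∀ (p : P) (l : Fin d), ∑ m : Fin d, B l m * lam p m = g p (x l))
    (hlamuniq : ∀ (p : P) (c : Fin d → ℂ),
      (∀ l : Fin d, ∑ m : Fin d, B l m * c m = g p (x l)) → c = lam p)
    (I : P → Ω → ℂ)
    (hI : ∀ (p : P) (y : Ω), I p y = ∑ m : Fin d, lam p m * q m y)
    (Γ : Matrix (Fin d) (Fin d) ℂ)
    (hΓ : ∀ (l : Fin d) (y : Ω), ∑ m : Fin d, Γ l m * q m y = g (μ l) y)
    (hΓinv : IsUnit Γ) :
    ∀ (p : P) (y : Ω),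
      I p y = ∑ l : Fin d, ∑ r : Fin d, (Γ * Bᵀ)⁻¹ l r * g p (x l) * g (μ r) y := by
  intro p y
  have hdet : IsUnit B.det := (Matrix.isUnit_iff_isUnit_det B).mp hBinv
  have hdetΓ : IsUnit Γ.det := (Matrix.isUnit_iff_isUnit_det Γ).mp hΓinv
  have hlamv : ∀ m, lam p m = ∑ l, B⁻¹ m l * g p (x l) := by
    have hmv : B.mulVec (lam p) = fun l => g p (x l) := funext fun l => by
      simpa [Matrix.mulVec, dotProduct] using hlam p l
    have h2 : lam p = B⁻¹.mulVec (fun l => g p (x l)) := by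
      rw [← hmv, Matrix.mulVec_mulVec, Matrix.nonsing_inv_mul B hdet, Matrix.one_mulVec]
    intro m
    rw [h2]
    simp [Matrix.mulVec, dotProduct]
  have hkey : (Γ * Bᵀ)⁻¹ * Γ = B⁻¹ᵀ := by
    rw [Matrix.mul_inv_rev, Matrix.mul_assoc, Matrix.nonsing_inv_mul Γ hdetΓ,
      Matrix.mul_one, Matrix.transpose_nonsing_inv]
  have hkey' : ∀ l m, ∑ r, (Γ * Bᵀ)⁻¹ l r * Γ r m = B⁻¹ m l := by
    intro l m
    have := congrFun (congrFun hkey l) m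
    simpa [Matrix.mul_apply, Matrix.transpose_apply] using this
  calc I p y = ∑ m : Fin d, lam p m * q m y := hI p y
    _ = ∑ m : Fin d, (∑ l, B⁻¹ m l * g p (x l)) * q m y := by
        refine Finset.sum_congr rfl fun m _ => by rw [hlamv m]
    _ = ∑ m : Fin d, ∑ l, ∑ r, (Γ * Bᵀ)⁻¹ l r * Γ r m * g p (x l) * q m y := by
        refine Finset.sum_congr rfl fun m _ => ?_
        rw [Finset.sum_mul]
        refine Finset.sum_congr rfl fun l _ => ?_
        rw [← hkey' l m, Finset.sum_mul, Finset.sum_mul]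
    _ = ∑ l, ∑ r, ∑ m : Fin d, (Γ * Bᵀ)⁻¹ l r * Γ r m * g p (x l) * q m y := by
        rw [Finset.sum_comm]
        exact Finset.sum_congr rfl fun l _ => Finset.sum_comm
    _ = ∑ l, ∑ r, (Γ * Bᵀ)⁻¹ l r * g p (x l) * g (μ r) y := by
        refine Finset.sum_congr rfl fun l _ => Finset.sum_congr rfl fun r _ => ?_
        rw [← hΓ r y, Finset.mul_sum]
        refine Finset.sum_congr rfl fun m _ => by ring
end

section
/- (Inductive step of Lemma 2, Slice-2 variant.) Fix 1 ≤ k < d and suppose Γ^(k) ∈ ℂ^{k×k} satisfies Σ_{m=1}^k Γ^(k)_{l,m} q'_m(μ) = g(μ, x_l) for all 1 ≤ l ≤ k and all μ ∈ 𝒫. Define Γ^(k+1) ∈ ℂ^{(k+1)×(k+1)} by: Γ^(k+1)_{l,m} = Γ^(k)_{l,m} for l,m ≤ k; Γ^(k+1)_{l,k+1} = 0 for l ≤ k; Γ^(k+1)_{k+1,k+1} = (δ'_k g)(μ_{k+1}, x_{k+1}); and Γ^(k+1)_{k+1,l} = κ_l for l ≤ k, where κ ∈ ℂ^k is the unique solution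 of Σ_{m=1}^k B'^(k)_{l,m} κ_m = g(μ_l, x_{k+1}) for all 1 ≤ l ≤ k. Then Σ_{m=1}^{k+1} Γ^(k+1)_{l,m} q'_m(μ) = g(μ, x_l) for all 1 ≤ l ≤ k+1 and all μ ∈ 𝒫. -/
lemma sum_ite_fin' {d k : ℕ} (hk : k ≤ d) (f : Fin d → ℂ) :
    ∑ m : Fin d, (if (m : ℕ) < k then f m else 0) =
      ∑ m : Fin k, f (Fin.castLE hk m) := by
  set G : ℕ → ℂ := fun i => if h : i < k then f (Fin.castLE hk ⟨i, h⟩) else 0 with hG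
  have h1 : ∑ m : Fin d, (if (m : ℕ) < k then f m else 0) = ∑ m : Fin d, G (m : ℕ) := by
    refine Finset.sum_congr rfl fun m _ => ?_
    by_cases h : (m : ℕ) < k
    · simp [hG, h]
    · simp [hG, h]
  rw [h1, Fin.sum_univ_eq_sum_range G]
  have h2 : ∑ m : Fin k, f (Fin.castLE hk m) = ∑ i ∈ Finset.range k, G i := by
    rw [← Fin.sum_univ_eq_sum_range G k]
    refine Finset.sum_congr rfl fun m _ => ?_
    simp only [hG, m.isLt, dif_pos]
  rw [h2]
  symm
  apply Finset.sum_subset (Finset.range_subset_range.mpr hk)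
  intro i _ hi
  simp only [Finset.mem_range, not_lt] at hi
  simp [hG, Nat.not_lt.mpr hi]

/-- Inductive step of Lemma 2 (Slice-2 variant): given the change-of-basis matrix `Γ^(k)`
with `Σ_m Γ^(k)_{l,m} q'_m(μ) = g(μ, x_l)`, the matrix `Γ^(k+1)` built from `Γ^(k)`,
the residual value and the vector `κ` satisfies the same relation at rank `k+1`. -/
theorem stmt11 {P Ω : Type*} [Nonempty P] [Nonempty Ω]
    (g : P → Ω → ℂ) (d : ℕ)
    (x : Fin d → Ω) (μ : Fin d → P) (q' : Fin d → P → ℂ)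
    (k : ℕ) (hk1 : 1 ≤ k) (hk : k < d)
    (lam : Ω → Fin d → ℂ)
    -- λ(x) solves the rank-k Slice-2 EIM system with matrix B'^(k)_{l,m} = q'_m(μ_l)
    (hlam : ∀ (y : Ω) (l : Fin d), (l : ℕ) < k →
      ∑ m : Fin d, (if (m : ℕ) < k then q' m (μ l) * lam y m else 0) = g (μ l) y)
    -- the residual δ'_k g is nonzero at (μ_{k+1}, x_{k+1})
    (hres : g (μ ⟨k, hk⟩) (x ⟨k, hk⟩) -
      ∑ m : Fin d, (if (m : ℕ) < k then lam (x ⟨k, hk⟩) m * q' m (μ ⟨k, hk⟩) else 0) ≠ 0)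
    -- q'_{k+1} is the normalized residual
    (hqk : ∀ p : P, q' ⟨k, hk⟩ p =
      (g p (x ⟨k, hk⟩) -
        ∑ m : Fin d, (if (m : ℕ) < k then lam (x ⟨k, hk⟩) m * q' m p else 0)) /
      (g (μ ⟨k, hk⟩) (x ⟨k, hk⟩) -
        ∑ m : Fin d, (if (m : ℕ) < k then lam (x ⟨k, hk⟩) m * q' m (μ ⟨k, hk⟩) else 0)))
    (Γk : Matrix (Fin k) (Fin k) ℂ)
    (hΓk : ∀ (l : Fin k) (p : P),
      ∑ m : Fin k, Γk l m * q' (Fin.castLE hk.le m) p = g p (x (Fin.castLE hk.le l)))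
    (κ : Fin k → ℂ)
    -- κ is the solution of Σ_m B'^(k)_{l,m} κ_m = g(μ_l, x_{k+1})
    (hκ : ∀ l : Fin k, ∑ m : Fin k,
      q' (Fin.castLE hk.le m) (μ (Fin.castLE hk.le l)) * κ m =
      g (μ (Fin.castLE hk.le l)) (x ⟨k, hk⟩))
    (hκuniq : ∀ κ' : Fin k → ℂ,
      (∀ l : Fin k, ∑ m : Fin k,
        q' (Fin.castLE hk.le m) (μ (Fin.castLE hk.le l)) * κ' m =
        g (μ (Fin.castLE hk.le l)) (x ⟨k, hk⟩)) → κ' = κ)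
    (Γk1 : Matrix (Fin (k + 1)) (Fin (k + 1)) ℂ)
    (hG1 : ∀ l m : Fin k, Γk1 (Fin.castSucc l) (Fin.castSucc m) = Γk l m)
    (hG2 : ∀ l : Fin k, Γk1 (Fin.castSucc l) (Fin.last k) = 0)
    (hG3 : Γk1 (Fin.last k) (Fin.last k) =
      g (μ ⟨k, hk⟩) (x ⟨k, hk⟩) -
        ∑ m : Fin d, (if (m : ℕ) < k then lam (x ⟨k, hk⟩) m * q' m (μ ⟨k, hk⟩) else 0))
    (hG4 : ∀ l : Fin k, Γk1 (Fin.last k) (Fin.castSucc l) = κ l) :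
    ∀ (l : Fin (k + 1)) (p : P),
      ∑ m : Fin (k + 1), Γk1 l m * q' (Fin.castLE hk m) p = g p (x (Fin.castLE hk l)) := by
  have hcast : ∀ m : Fin k, Fin.castLE hk (Fin.castSucc m) = Fin.castLE hk.le m := by
    intro m; ext; rfl
  have hlast : Fin.castLE hk (Fin.last k) = (⟨k, hk⟩ : Fin d) := by ext; rfl
  intro l p
  refine Fin.lastCases ?_ ?_ l
  · -- l = last k
    rw [Fin.sum_univ_castSucc]
    simp only [hG3, hG4, hcast, hlast]
    -- κ equals lam (x ⟨k,hk⟩) restricted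
    have hκeq : (fun m : Fin k => lam (x ⟨k, hk⟩) (Fin.castLE hk.le m)) = κ := by
      apply hκuniq
      intro l'
      have := hlam (x ⟨k, hk⟩) (Fin.castLE hk.le l') l'.isLt
      rwa [sum_ite_fin' hk.le (fun m => q' m (μ (Fin.castLE hk.le l')) * lam (x ⟨k, hk⟩) m)]
        at this
    have hS : ∑ m : Fin d, (if (m : ℕ) < k then lam (x ⟨k, hk⟩) m * q' m p else 0)
        = ∑ m : Fin k, κ m * q' (Fin.castLE hk.le m) p := by
      rw [sum_ite_fin' hk.le (fun m => lam (x ⟨k, hk⟩) m * q' m p)]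
      refine Finset.sum_congr rfl fun m _ => ?_
      rw [← hκeq]
    rw [hqk p, mul_div_cancel₀ _ hres, hS]
    ring
  · -- l = castSucc l'
    intro l'
    rw [Fin.sum_univ_castSucc]
    simp only [hG1, hG2, hcast, zero_mul, add_zero]
    exact hΓk l' p
end

section
/- (Skeleton characterization; core of Remark 2.) Let 𝒫 and Ω be nonempty sets, g : 𝒫 × Ω → ℂ, d ≥ 1, x₁,…,x_d ∈ Ω, μ₁,…,μ_d ∈ 𝒫, and suppose the matrix M ∈ ℂ^{d×d} with entries M_{r,l} = g(μ_r, x_l) is invertible. Define F(μ,x) := Σ_{l=1}^d Σ_{r=1}^d (M⁻¹)_{l,r} g(μ, x_l) g(μ_r, x). Then: (a) F(μ, x_l) = g(μ, x_l) for all μ ∈ 𝒫 and 1 ≤ l ≤ d, and F(μ_r, x) = g(μ_r, x) for all x ∈ Ω and 1 ≤ r ≤ d; (b) F is the unique function of the form (μ,x) ↦ Σ_{r=1}^d a_r(μ) g(μ_r, x) (for some a_r : 𝒫 → ℂ) satisfying F(μ,x_l) = g(μ,x_l) for all μ, l; (c) F is also the unique function of the form (μ,x) ↦ Σ_{l=1}^d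 b_l(x) g(μ, x_l) (for some b_l : Ω → ℂ) satisfying F(μ_r,x) = g(μ_r,x) for all r, x. In particular, the Slice-1 and Slice-2 EIM interpolants built on the same interpolation points coincide. -/
open Matrix

/-- Skeleton characterization (core of Remark 2): with `M_{r,l} = g(μ_r,x_l)` invertible and
`F(μ,x) = Σ_{l,r} (M⁻¹)_{l,r} g(μ,x_l) g(μ_r,x)`, the function `F` interpolates `g` on the
cross `{x_l} ∪ {μ_r}`, and it is the unique function of either separated form with the
corresponding interpolation property; hence the Slice-1 and Slice-2 interpolants coincide. -/
theorem stmt16 {P Ω : Type*} [Nonempty P] [Nonempty Ω]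
    (g : P → Ω → ℂ) (d : ℕ) (hd : 1 ≤ d)
    (x : Fin d → Ω) (μ : Fin d → P)
    (M : Matrix (Fin d) (Fin d) ℂ)
    (hM : ∀ r l : Fin d, M r l = g (μ r) (x l))
    (hMinv : IsUnit M)
    (F : P → Ω → ℂ)
    (hF : ∀ (p : P) (y : Ω),
      F p y = ∑ l : Fin d, ∑ r : Fin d, M⁻¹ l r * g p (x l) * g (μ r) y) :
    -- (a) interpolation on the cross
    (∀ (p : P) (l : Fin d), F p (x l) = g p (x l)) ∧
    (∀ (r : Fin d) (y : Ω), F (μ r) y = g (μ r) y) ∧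
    -- (b) F is the unique function of the form Σ_r a_r(μ) g(μ_r,·) interpolating at the x_l
    (∃ a : Fin d → P → ℂ, ∀ (p : P) (y : Ω), F p y = ∑ r : Fin d, a r p * g (μ r) y) ∧
    (∀ a : Fin d → P → ℂ,
      (∀ (p : P) (l : Fin d), ∑ r : Fin d, a r p * g (μ r) (x l) = g p (x l)) →
      ∀ (p : P) (y : Ω), ∑ r : Fin d, a r p * g (μ r) y = F p y) ∧
    -- (c) F is the unique function of the form Σ_l b_l(x) g(·,x_l) interpolating at the μ_r
    (∃ b : Fin d → Ω → ℂ, ∀ (p : P) (y : Ω), F p y = ∑ l : Fin d, b l y * g p (x l)) ∧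
    (∀ b : Fin d → Ω → ℂ,
      (∀ (r : Fin d) (y : Ω), ∑ l : Fin d, b l y * g (μ r) (x l) = g (μ r) y) →
      ∀ (p : P) (y : Ω), ∑ l : Fin d, b l y * g p (x l) = F p y) := by
  have hdet : IsUnit M.det := (Matrix.isUnit_iff_isUnit_det M).mp hMinv
  have hinv1 : M⁻¹ * M = 1 := Matrix.nonsing_inv_mul M hdet
  have hinv2 : M * M⁻¹ = 1 := Matrix.mul_nonsing_inv M hdet
  have h1 : ∀ l l' : Fin d, ∑ r : Fin d, M⁻¹ l r * M r l' = if l = l' then 1 else 0 := by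
    intro l l'
    have := congrFun (congrFun hinv1 l) l'
    rwa [Matrix.mul_apply, Matrix.one_apply] at this
  have h2 : ∀ r r' : Fin d, ∑ l : Fin d, M r l * M⁻¹ l r' = if r = r' then 1 else 0 := by
    intro r r'
    have := congrFun (congrFun hinv2 r) r'
    rwa [Matrix.mul_apply, Matrix.one_apply] at this
  -- (a1)
  have a1 : ∀ (p : P) (l : Fin d), F p (x l) = g p (x l) := by
    intro p l'
    rw [hF]
    have step : ∀ l : Fin d, ∑ r : Fin d, M⁻¹ l r * g p (x l) * g (μ r) (x l') =
        g p (x l) * (if l = l' then 1 else 0) := by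
      intro l
      rw [← h1 l l', Finset.mul_sum]
      refine Finset.sum_congr rfl fun r _ => ?_
      rw [hM]; ring
    simp_rw [step]
    simp
  -- (a2)
  have a2 : ∀ (r : Fin d) (y : Ω), F (μ r) y = g (μ r) y := by
    intro r' y
    rw [hF, Finset.sum_comm]
    have step : ∀ r : Fin d, ∑ l : Fin d, M⁻¹ l r * g (μ r') (x l) * g (μ r) y =
        (if r' = r then 1 else 0) * g (μ r) y := by
      intro r
      rw [← h2 r' r, Finset.sum_mul]
      refine Finset.sum_congr rfl fun l _ => ?_
      rw [hM]; ring
    simp_rw [step]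
    simp
  refine ⟨a1, a2, ?_, ?_, ?_, ?_⟩
  · -- (b) existence
    refine ⟨fun r p => ∑ l : Fin d, M⁻¹ l r * g p (x l), fun p y => ?_⟩
    rw [hF, Finset.sum_comm]
    refine Finset.sum_congr rfl fun r _ => ?_
    rw [Finset.sum_mul]
  · -- (b) uniqueness
    intro a ha p y
    have key : ∀ r : Fin d, a r p = ∑ l : Fin d, g p (x l) * M⁻¹ l r := by
      intro r
      symm
      calc ∑ l : Fin d, g p (x l) * M⁻¹ l r
          = ∑ l : Fin d, (∑ s : Fin d, a s p * g (μ s) (x l)) * M⁻¹ l r := by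
            refine Finset.sum_congr rfl fun l _ => ?_; rw [ha p l]
        _ = ∑ s : Fin d, a s p * ∑ l : Fin d, M s l * M⁻¹ l r := by
            simp_rw [Finset.sum_mul, Finset.mul_sum]
            rw [Finset.sum_comm]
            refine Finset.sum_congr rfl fun s _ => Finset.sum_congr rfl fun l _ => ?_
            rw [hM]; ring
        _ = a r p := by simp_rw [h2]; simp
    rw [hF, Finset.sum_comm]
    refine Finset.sum_congr rfl fun r _ => ?_
    rw [key r, Finset.sum_mul]
    refine Finset.sum_congr rfl fun l _ => ?_
    ring
  · -- (c) existence
    refine ⟨fun l y => ∑ r : Fin d, M⁻¹ l r * g (μ r) y, fun p y => ?_⟩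
    rw [hF]
    refine Finset.sum_congr rfl fun l _ => ?_
    rw [Finset.sum_mul]
    refine Finset.sum_congr rfl fun r _ => ?_
    ring
  · -- (c) uniqueness
    intro b hb p y
    have key : ∀ l : Fin d, b l y = ∑ r : Fin d, M⁻¹ l r * g (μ r) y := by
      intro l
      symm
      calc ∑ r : Fin d, M⁻¹ l r * g (μ r) y
          = ∑ r : Fin d, M⁻¹ l r * ∑ s : Fin d, b s y * g (μ r) (x s) := by
            refine Finset.sum_congr rfl fun r _ => ?_; rw [hb r y]
        _ = ∑ s : Fin d, b s y * ∑ r : Fin d, M⁻¹ l r * M r s := by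
            simp_rw [Finset.mul_sum]
            rw [Finset.sum_comm]
            refine Finset.sum_congr rfl fun s _ => Finset.sum_congr rfl fun r _ => ?_
            rw [hM]; ring
        _ = b l y := by simp_rw [h1]; simp
    rw [hF]
    refine Finset.sum_congr rfl fun l _ => ?_
    rw [key l, Finset.sum_mul]
    refine Finset.sum_congr rfl fun r _ => ?_
    ring
end
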